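/- Let G = (V,E) be a directed graph and A, B, C ⊆ V pairwise disjoint sets such that A ∪ B ∪ C is ancestral (i.e., pa(A ∪ B ∪ C) = ∅). Then for every vertex γ ∈ V \ (A ∪ B ∪ C), the set A ∪ C δ-separates {γ} from B in G; that is, {γ} ir_δ B | (A ∪ C). -/

import Mathlib

open Set

variable {V : Type*}

/-- There is a directed path (a sequence of ≥ 2 distinct vertices joined by
directed edges) from `v` to `w`; i.e. `v` is an ancestor of `w`. -/
def DirPathConn (E : V → V → Prop) (v w : V) : Prop :=
  ∃ l : List V, l.Chain' E ∧ l.Nodup ∧ 2 ≤ l.length ∧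
    l.head? = some v ∧ l.getLast? = some w

/-- `an(A)`: vertices outside `A` that are ancestors of some element of `A`. -/
def anSet (E : V → V → Prop) (A : Set V) : Set V :=
  {v | v ∉ A ∧ ∃ a ∈ A, DirPathConn E v a}

/-- `An(A) = A ∪ an(A)`, the smallest ancestral set containing `A`. -/
def AnSet (E : V → V → Prop) (A : Set V) : Set V := A ∪ anSet E A

/-- `pa(A)`: parents of `A` outside of `A`. -/
def paSet (E : V → V → Prop) (A : Set V) : Set V :=
  {v | v ∉ A ∧ ∃ a ∈ A, E v a}

/-- `cl(A) = A ∪ pa(A)`, the closure of `A`. -/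
def clSet (E : V → V → Prop) (A : Set V) : Set V := A ∪ paSet E A

/-- The induced subgraph `G_A` (as an edge relation on `V` supported on `A`). -/
def inducedGraph (E : V → V → Prop) (A : Set V) : V → V → Prop :=
  fun j k => E j k ∧ j ∈ A ∧ k ∈ A

/-- `G^B`: delete from `G` every directed edge starting in `B`. -/
def delOut (E : V → V → Prop) (B : Set V) : V → V → Prop :=
  fun j k => E j k ∧ j ∉ B

/-- The moral graph `G^m`: distinct `j, k` are adjacent iff they are joined by
an edge in some direction or have a common child. -/
def moralGraph (E : V → V → Prop) : V → V → Prop :=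
  fun j k => j ≠ k ∧ (E j k ∨ E k j ∨ ∃ c, E j c ∧ E k c)

/-- `l` is an undirected path from `v` to `w` in the undirected graph `H`:
a sequence of ≥ 2 distinct vertices, consecutive ones adjacent. -/
def IsUPath (H : V → V → Prop) (l : List V) (v w : V) : Prop :=
  l.Chain' H ∧ l.Nodup ∧ 2 ≤ l.length ∧
    l.head? = some v ∧ l.getLast? = some w

/-- `A ⊥_g B | C` in the undirected graph `H`: every path from a vertex of `A`
to a vertex of `B` contains a vertex of `C`. -/
def uSep (H : V → V → Prop) (A B C : Set V) : Prop :=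
  ∀ v ∈ A, ∀ w ∈ B, ∀ l : List V, IsUPath H l v w → ∃ c ∈ C, c ∈ l

/-- δ-separation for pairwise disjoint `A, B, C`: `A ⊥_g B | C` in the moral
graph of the subgraph of `G^B` induced by `An(A ∪ B ∪ C)`. -/
def deltaSepDisjoint (E : V → V → Prop) (A B C : Set V) : Prop :=
  uSep (moralGraph (inducedGraph (delOut E B) (AnSet E (A ∪ B ∪ C)))) A B C

/-- δ-separation `A ir_δ B | C` for general (not necessarily disjoint) sets:
`C \ B` δ-separates `A \ (B ∪ C)` from `B`. -/
def deltaSep (E : V → V → Prop) (A B C : Set V) : Prop :=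
  deltaSepDisjoint E (A \ (B ∪ C)) B (C \ B)

/-- If `A ∪ B ∪ C` is ancestral and `γ ∉ A ∪ B ∪ C`, then `A ∪ C`
δ-separates `{γ}` from `B`. -/
theorem deltaSep_of_ancestral [Fintype V] (E : V → V → Prop)
    (hE : ∀ j k, E j k → j ≠ k) (A B C : Set V)
    (hAB : Disjoint A B) (hAC : Disjoint A C) (hBC : Disjoint B C)
    (hAnc : paSet E (A ∪ B ∪ C) = ∅) (γ : V) (hγ : γ ∈ Set.univ \ (A ∪ B ∪ C)) :
    deltaSep E {γ} B (A ∪ C) := by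
  obtain ⟨-, hγS⟩ := hγ
  set S : Set V := A ∪ B ∪ C with hS
  have hnoPar : ∀ v a, v ∉ S → a ∈ S → ¬ E v a := by
    intro v a hv ha h
    exact (Set.eq_empty_iff_forall_notMem.mp hAnc v) ⟨hv, a, ha, h⟩
  set H := moralGraph (inducedGraph (delOut E B)
    (AnSet E ({γ} \ (B ∪ (A ∪ C)) ∪ B ∪ ((A ∪ C) \ B)))) with hH
  have key : ∀ y x, H y x → y ∉ S → x ∈ S → x ∈ (A ∪ C) \ B := by
    intro y x hyx hy hx
    obtain ⟨-, hcase⟩ := hyx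
    rcases hcase with ⟨⟨h1, -⟩, -, -⟩ | ⟨⟨h1, hxB⟩, -, -⟩ |
      ⟨c, ⟨⟨hyc, -⟩, -, -⟩, ⟨hxc, hxB⟩, -, -⟩
    · exact absurd h1 (hnoPar y x hy hx)
    · refine ⟨?_, hxB⟩
      rcases hx with (hx | hx) | hx
      · exact Or.inl hx
      · exact absurd hx hxB
      · exact Or.inr hx
    · refine ⟨?_, hxB⟩
      rcases hx with (hx | hx) | hx
      · exact Or.inl hx
      · exact absurd hx hxB
      · exact Or.inr hx
  have path : ∀ l : List V, l.Chain' H → ∀ v, l.head? = some v → v ∉ S →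
      ∀ w ∈ l, w ∈ S → ∃ c ∈ (A ∪ C) \ B, c ∈ l := by
    intro l
    induction l with
    | nil => intro _ v hv; simp at hv
    | cons a t ih =>
      intro hch v hv hvS w hw hwS
      have hav : a = v := by simpa using hv
      subst hav
      rcases List.mem_cons.mp hw with rfl | hw
      · exact absurd hwS hvS
      · cases t with
        | nil => simp at hw
        | cons x t' =>
          have hax : H a x := (List.isChain_cons_cons.mp hch).1
          by_cases hxS : x ∈ S
          · exact ⟨x, key a x hax hvS hxS, by simp⟩
          · obtain ⟨c, hc, hcl⟩ := ih (List.isChain_cons_cons.mp hch).2 x rfl hxS w hw hwS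
            exact ⟨c, hc, List.mem_cons_of_mem _ hcl⟩
  intro v hv w hw l hl
  obtain ⟨hch, -, -, hhead, hlast⟩ := hl
  have hvγ : v = γ := hv.1
  subst hvγ
  have hwl : w ∈ l := List.mem_of_getLast? hlast
  exact path l hch v hhead hγS w hwl (Or.inl (Or.inr hw))
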